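/- Fix an integer k ≥ 2, let f_ℓ(n) be the number of row-convex k-omino towers of n blocks over a platform of width ℓk, and let F_ℓ = Σ_{n=0}^∞ f_ℓ(n) z^n ∈ ℚ[[z]]. With A_ℓ, B_ℓ ∈ ℚ[[z]] as defined below and T_{s,t} = A_s B_t − A_t B_s, for every ℓ ≥ 1 the following identity holds in ℚ[[z]]: F_ℓ · [(1 − (2k−1)(1+z)z + k² z³) T_{1,2} + (k−1)((2k−1)z − 1) z³ T_{1,3} + (k−1)² z⁵ T_{2,3}] = (1 + kz) T_{1,ℓ} + (kz² − 1) T_{2,ℓ} + (k−1) z³ T_{3,ℓ}. -/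

import Mathlib

/-- A block: a rectangle of width `width` and height 1, whose leftmost cell is in
column `left` and whose row is `height`. -/
structure Blk where
  left : ℤ
  height : ℕ
  width : ℕ
deriving DecidableEq

/-- The set of columns occupied by a block. -/
def Blk.colsSet (b : Blk) : Set ℤ := Set.Ico b.left (b.left + b.width)

/-- The set of cells occupied by a block. -/
def Blk.cells (b : Blk) : Set (ℤ × ℕ) := b.colsSet ×ˢ ({b.height} : Set ℕ)

/-- The blocks of a configuration occupy pairwise disjoint cells. -/
def disjointCells (T : Finset Blk) : Prop :=
  (T : Set Blk).Pairwise fun a b => Disjoint a.cells b.cells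

/-- Every block at height `h + 1` shares a column with some block at height `h`. -/
def supported (T : Finset Blk) : Prop :=
  ∀ b ∈ T, ∀ h : ℕ, b.height = h + 1 →
    ∃ b' ∈ T, b'.height = h ∧ ∃ x : ℤ, x ∈ b.colsSet ∧ x ∈ b'.colsSet

/-- The set of columns occupied by the blocks of `T` at height `h`. -/
def colsAt (T : Finset Blk) (h : ℕ) : Set ℤ :=
  {x | ∃ b ∈ T, b.height = h ∧ x ∈ b.colsSet}

/-- Every row is convex: at each height, the set of occupied columns is an interval. -/
def rowConvex (T : Finset Blk) : Prop :=
  ∀ h : ℕ, ∀ x y z : ℤ, x ∈ colsAt T h → z ∈ colsAt T h → x ≤ y → y ≤ z →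
    y ∈ colsAt T h

/-- A row-convex `k`-omino tower over a platform of width `ℓk`: a finite, possibly
empty, collection of pairwise disjoint blocks of width `k`, every row convex, every
block at height `h ≥ 1` sharing a column with some block at height `h − 1`, and every
block at height `0` sharing a column with the platform `{0, 1, …, ℓk − 1}`.
Configurations are not identified up to translation. -/
def IsPlatformRC (k ℓ : ℕ) (T : Finset Blk) : Prop :=
  (∀ b ∈ T, b.width = k) ∧ disjointCells T ∧ supported T ∧ rowConvex T ∧
    ∀ b ∈ T, b.height = 0 → ∃ x : ℤ, x ∈ b.colsSet ∧ 0 ≤ x ∧ x < (ℓ * k : ℤ)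

/-- `f_ℓ(n)`: the number of row-convex `k`-omino towers of `n` blocks over a platform
of width `ℓk`. -/
noncomputable def fPlatform (k ℓ n : ℕ) : ℕ :=
  Nat.card {T : Finset Blk // IsPlatformRC k ℓ T ∧ T.card = n}

/-- The `q`-Pochhammer symbol `(z;z)_j = ∏_{i=1}^{j} (1 − zⁱ)` in `ℚ[[z]]`. -/
noncomputable def qPoch (j : ℕ) : PowerSeries ℚ :=
  ∏ i ∈ Finset.Icc 1 j, (1 - (PowerSeries.X : PowerSeries ℚ) ^ i)

/-- `h_j = z^{j(j+1)} · ((1−k)z; z)_j = z^{j(j+1)} · ∏_{i=1}^{j} (1 + (k−1) zⁱ)`. -/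
noncomputable def hSer (k j : ℕ) : PowerSeries ℚ :=
  (PowerSeries.X : PowerSeries ℚ) ^ (j * (j + 1)) *
    ∏ i ∈ Finset.Icc 1 j, (1 + PowerSeries.C ((k : ℚ) - 1) * PowerSeries.X ^ i)

/-- The `j`-th summand `z^{ℓj} h_j (z;z)_j^{−2}` of `A_ℓ`. -/
noncomputable def Aterm (k ℓ j : ℕ) : PowerSeries ℚ :=
  (PowerSeries.X : PowerSeries ℚ) ^ (ℓ * j) * hSer k j * ((qPoch j)⁻¹) ^ 2

/-- `A_ℓ = Σ_{j=0}^∞ z^{ℓj} h_j (z;z)_j^{−2}`.  The series converges in the `z`-adic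
topology since `h_j` is divisible by `z^{j(j+1)}`; the coefficient of `zⁿ` only receives
contributions from the finitely many `j ≤ n`, so the sum may be truncated there. -/
noncomputable def Aser (k ℓ : ℕ) : PowerSeries ℚ :=
  PowerSeries.mk fun n =>
    ∑ j ∈ Finset.range (n + 1), PowerSeries.coeff n (Aterm k ℓ j)

/-- The factor `ℓ + Σ_{m=1}^{j} (1 + 2(1 − z^m)^{−1} − (1 + (k−1) z^m)^{−1})`. -/
noncomputable def Bfactor (k ℓ j : ℕ) : PowerSeries ℚ :=
  (ℓ : PowerSeries ℚ) +
    ∑ m ∈ Finset.Icc 1 j,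
      (1 + 2 * ((1 - (PowerSeries.X : PowerSeries ℚ) ^ m)⁻¹) -
        ((1 + PowerSeries.C ((k : ℚ) - 1) * PowerSeries.X ^ m)⁻¹))

/-- The `j`-th summand of `B_ℓ`. -/
noncomputable def Bterm (k ℓ j : ℕ) : PowerSeries ℚ :=
  Aterm k ℓ j * Bfactor k ℓ j

/-- `B_ℓ = Σ_{j=0}^∞ z^{ℓj} h_j (z;z)_j^{−2} ·
(ℓ + Σ_{m=1}^{j} (1 + 2(1 − z^m)^{−1} − (1 + (k−1) z^m)^{−1}))`, the series converging
`z`-adically since `h_j` is divisible by `z^{j(j+1)}`. -/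
noncomputable def Bser (k ℓ : ℕ) : PowerSeries ℚ :=
  PowerSeries.mk fun n =>
    ∑ j ∈ Finset.range (n + 1), PowerSeries.coeff n (Bterm k ℓ j)

/-- `F_ℓ = Σ_{n≥0} f_ℓ(n) zⁿ ∈ ℚ[[z]]`, where `f_ℓ(n)` is the number of row-convex
`k`-omino towers of `n` blocks over a platform of width `ℓk`. -/
noncomputable def Fser (k ℓ : ℕ) : PowerSeries ℚ :=
  PowerSeries.mk fun n => (fPlatform k ℓ n : ℚ)

/-- `T_{s,t} = A_s B_t − A_t B_s`. -/
noncomputable def Tst (k s t : ℕ) : PowerSeries ℚ :=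
  Aser k s * Bser k t - Aser k t * Bser k s

noncomputable section
namespace RCT
open PowerSeries Finset

abbrev Q := PowerSeries ℚ


def wq (k j i : ℕ) : ℚ := k * ((j:ℚ) - i) + 2*k - 1

def Lop (k : ℕ) (A : ℕ → Q) (j : ℕ) : Q :=
  A j - ∑ i ∈ Finset.Icc 1 (j+1), PowerSeries.C (wq k j i) * X^i * A i

def Rec3 (k : ℕ) (A : ℕ → Q) : Prop := ∀ j : ℕ,
  A j - 2 * A (j+1) + (1 - X^(j+2)) * A (j+2) - C ((k:ℚ)-1) * X^(j+3) * A (j+3) = 0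

lemma Icc_insert_top (a b : ℕ) (h : a ≤ b + 1) :
    Finset.Icc a (b+1) = insert (b+1) (Finset.Icc a b) := by
  ext x; simp [Finset.mem_Icc]; omega

lemma Lop_secondDiff (k : ℕ) (A : ℕ → Q) (j : ℕ) :
    Lop k A j - 2 * Lop k A (j+1) + Lop k A (j+2)
      = A j - 2*A (j+1) + (1 - X^(j+2)) * A (j+2) - C ((k:ℚ)-1) * X^(j+3) * A (j+3) := by
  have h1 : Finset.Icc 1 (j+2) = insert (j+2) (Finset.Icc 1 (j+1)) :=
    Icc_insert_top 1 (j+1) (by omega)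
  have h2 : Finset.Icc 1 (j+3) = insert (j+3) (insert (j+2) (Finset.Icc 1 (j+1))) := by
    rw [Icc_insert_top 1 (j+2) (by omega), Icc_insert_top 1 (j+1) (by omega)]
  have hmem1 : (j+2) ∉ Finset.Icc 1 (j+1) := by simp
  have hmem2 : (j+3) ∉ insert (j+2) (Finset.Icc 1 (j+1)) := by simp
  unfold Lop
  rw [h1, h2, Finset.sum_insert hmem2, Finset.sum_insert hmem1, Finset.sum_insert hmem1]
  have hsum : ∑ i ∈ Finset.Icc 1 (j+1), C (wq k j i) * X^i * A i
      - 2 * ∑ i ∈ Finset.Icc 1 (j+1), C (wq k (j+1) i) * X^i * A i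
      + ∑ i ∈ Finset.Icc 1 (j+1), C (wq k (j+2) i) * X^i * A i = 0 := by
    rw [Finset.mul_sum, ← Finset.sum_sub_distrib, ← Finset.sum_add_distrib]
    apply Finset.sum_eq_zero
    intro i _
    have hw : wq k j i + wq k (j+2) i = 2 * wq k (j+1) i := by
      unfold wq; push_cast; ring
    have hC : C (wq k j i) + C (wq k (j+2) i) = 2 * C (wq k (j+1) i) := by
      rw [← map_add, hw, map_mul, map_ofNat]
    linear_combination (X^i * A i) * hC
  have hw1 : wq k (j+1) (j+2) = (k:ℚ) - 1 := by unfold wq; push_cast; ring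
  have hw2 : wq k (j+2) (j+2) = 2*(k:ℚ) - 1 := by unfold wq; push_cast; ring
  have hw3 : wq k (j+2) (j+3) = (k:ℚ) - 1 := by unfold wq; push_cast; ring
  rw [hw1, hw2, hw3]
  have hC : C (2*(k:ℚ)-1) = 2 * C ((k:ℚ)-1) + 1 := by
    rw [show (2*(k:ℚ)-1) = 2*((k:ℚ)-1)+1 by ring, map_add, map_mul, map_ofNat, map_one]
  rw [hC]
  have hX : (X : Q)^(j+3) = X^(j+2) * X := by rw [← pow_succ]
  rw [hX]
  linear_combination -hsum

lemma Lop_diff_const (k : ℕ) (A : ℕ → Q) (hA : Rec3 k A) (j : ℕ) :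
    Lop k A (j+1) - Lop k A j = Lop k A 1 - Lop k A 0 := by
  induction j with
  | zero => rfl
  | succ m ih =>
    have h := Lop_secondDiff k A m
    rw [hA m] at h
    have : Lop k A (m+2) - Lop k A (m+1) = Lop k A (m+1) - Lop k A m := by
      linear_combination h
    rw [this, ih]

lemma Lop_linear (k : ℕ) (A B : ℕ → Q) (cA cB : Q) (m : ℕ) :
    Lop k (fun i => cB * A i - cA * B i) m = cB * Lop k A m - cA * Lop k B m := by
  unfold Lop
  have : ∀ i ∈ Finset.Icc 1 (m+1), C (wq k m i) * X^i * (cB * A i - cA * B i)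
      = cB * (C (wq k m i) * X^i * A i) - cA * (C (wq k m i) * X^i * B i) := by
    intro i _; ring
  rw [Finset.sum_congr rfl this, Finset.sum_sub_distrib, ← Finset.mul_sum, ← Finset.mul_sum]
  ring

lemma Lop_W_const (k : ℕ) (A B : ℕ → Q) (hA : Rec3 k A) (hB : Rec3 k B)
    (cA cB : Q)
    (hc : cB * (Lop k A 2 - Lop k A 1) = cA * (Lop k B 2 - Lop k B 1)) (j : ℕ) :
    Lop k (fun i => cB * A i - cA * B i) j = cB * Lop k A 1 - cA * Lop k B 1 := by
  set W : ℕ → Q := fun i => cB * A i - cA * B i with hW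
  have hWrec : Rec3 k W := by
    intro m
    have hA' := hA m; have hB' := hB m
    simp only [hW]
    linear_combination cB * hA' - cA * hB'
  have hz : Lop k W 2 - Lop k W 1 = 0 := by
    rw [Lop_linear, Lop_linear]
    linear_combination hc
  have hz0 : Lop k W 1 - Lop k W 0 = 0 := by
    have := Lop_diff_const k W hWrec 1
    rw [← this]; exact hz
  have hall : ∀ m, Lop k W m = Lop k W 0 := by
    intro m
    induction m with
    | zero => rfl
    | succ p ih =>
      have := Lop_diff_const k W hWrec p
      rw [hz0] at this
      have : Lop k W (p+1) = Lop k W p := by linear_combination this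
      rw [this, ih]
  rw [hall j, show Lop k W 0 = Lop k W 1 by linear_combination -hz0, Lop_linear]

lemma unique_sol (k : ℕ) (R : Q) (Xs Ys : ℕ → Q)
    (hX : ∀ j, 1 ≤ j → Xs j = R + ∑ i ∈ Finset.Icc 1 (j+1), C (wq k j i) * X^i * Xs i)
    (hY : ∀ j, 1 ≤ j → Ys j = R + ∑ i ∈ Finset.Icc 1 (j+1), C (wq k j i) * X^i * Ys i) :
    ∀ j, 1 ≤ j → Xs j = Ys j := by
  have key : ∀ n : ℕ, ∀ j, 1 ≤ j → (coeff n) (Xs j - Ys j) = 0 := by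
    intro n
    induction n using Nat.strong_induction_on with
    | _ n ih =>
      intro j hj
      have h : Xs j - Ys j = ∑ i ∈ Finset.Icc 1 (j+1), C (wq k j i) * X^i * (Xs i - Ys i) := by
        rw [hX j hj, hY j hj]
        rw [Finset.sum_congr rfl (fun i _ => by ring :
          ∀ i ∈ Finset.Icc 1 (j+1), C (wq k j i) * X^i * (Xs i - Ys i)
            = C (wq k j i) * X^i * Xs i - C (wq k j i) * X^i * Ys i)]
        rw [Finset.sum_sub_distrib]
        ring
      rw [h, map_sum]
      apply Finset.sum_eq_zero
      intro i hi
      simp only [Finset.mem_Icc] at hi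
      have hre : C (wq k j i) * X^i * (Xs i - Ys i)
          = C (wq k j i) * ((Xs i - Ys i) * X^i) := by ring
      rw [hre, PowerSeries.coeff_C_mul, PowerSeries.coeff_mul_X_pow']
      by_cases hin : i ≤ n
      · rw [if_pos hin, ih (n - i) (by omega) i hi.1]
        ring
      · rw [if_neg hin, mul_zero]
  intro j hj
  ext n
  have := key n j hj
  rw [map_sub] at this
  linarith [this]



lemma constCoeff_one_sub (m : ℕ) (hm : 1 ≤ m) :
    constantCoeff (1 - (X : Q)^m) = 1 := by
  simp [map_pow, zero_pow (by omega : m ≠ 0)]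

lemma constCoeff_one_add (c : ℚ) (m : ℕ) (hm : 1 ≤ m) :
    constantCoeff (1 + C c * (X : Q)^m) = 1 := by
  simp [map_pow, zero_pow (by omega : m ≠ 0)]

lemma inv_cancel_one_sub (m : ℕ) (hm : 1 ≤ m) :
    ((1 - (X : Q)^m)⁻¹) * (1 - (X : Q)^m) = 1 :=
  PowerSeries.inv_mul_cancel _ (by rw [constCoeff_one_sub m hm]; norm_num)

lemma inv_cancel_one_add (c : ℚ) (m : ℕ) (hm : 1 ≤ m) :
    ((1 + C c * (X : Q)^m)⁻¹) * (1 + C c * (X : Q)^m) = 1 :=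
  PowerSeries.inv_mul_cancel _ (by rw [constCoeff_one_add c m hm]; norm_num)

lemma qPoch_succ (i : ℕ) : qPoch (i+1) = qPoch i * (1 - (X : Q)^(i+1)) := by
  unfold qPoch
  rw [← Finset.prod_Icc_succ_top (by omega : 1 ≤ i+1)]

lemma qPoch_inv_succ (i : ℕ) :
    (qPoch (i+1))⁻¹ = (qPoch i)⁻¹ * ((1 - (X : Q)^(i+1))⁻¹) := by
  rw [qPoch_succ, PowerSeries.mul_inv_rev, mul_comm]

lemma hSer_succ (k i : ℕ) : hSer k (i+1)
    = hSer k i * ((X:Q)^(i+1) * X^(i+1) * (1 + C ((k:ℚ)-1) * X^(i+1))) := by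
  unfold hSer
  rw [Finset.prod_Icc_succ_top (by omega : 1 ≤ i+1),
    show (i+1)*(i+1+1) = i*(i+1) + ((i+1) + (i+1)) by ring, pow_add, pow_add]
  ring

/-- the telescoping term for the A recurrence -/
noncomputable def Eterm (k j i : ℕ) : Q :=
  X^(j*i) * hSer k i * ((qPoch i)⁻¹)^2 * (1 - X^i)^2

lemma Eterm_succ (k j i : ℕ) : Eterm k j (i+1)
    = hSer k i * ((qPoch i)⁻¹)^2 *
      (X^(j*i) * X^i * X^i * X^(j+2) * (1 + C ((k:ℚ)-1) * (X^i * X))) := by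
  unfold Eterm
  rw [hSer_succ, qPoch_inv_succ, mul_pow,
    show j*(i+1) = j*i + j by ring]
  have hc : ((1 - (X:Q)^(i+1))⁻¹)^2 * (1 - (X:Q)^(i+1))^2 = 1 := by
    rw [← mul_pow, inv_cancel_one_sub (i+1) (by omega), one_pow]
  have e1 : (X:Q)^(i+1) = X^i * X := by rw [pow_succ]
  have e2 : (X:Q)^(j*i+j) = X^(j*i) * X^j := by rw [pow_add]
  have e3 : (X:Q)^(j+2) = X^j * X * X := by rw [show j+2 = j+1+1 by ring, pow_succ, pow_succ]
  calc X ^ (j*i+j) * (hSer k i * (X ^ (i + 1) * X ^ (i + 1) * (1 + C (↑k - 1) * X ^ (i + 1)))) *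
        ((qPoch i)⁻¹ ^ 2 * ((1 - X ^ (i + 1))⁻¹)^2) * (1 - X ^ (i + 1)) ^ 2
      = X ^ (j*i+j) * (hSer k i * (X ^ (i + 1) * X ^ (i + 1) * (1 + C (↑k - 1) * X ^ (i + 1)))) *
        (qPoch i)⁻¹ ^ 2 * (((1 - X ^ (i + 1))⁻¹)^2 * (1 - X ^ (i + 1)) ^ 2) := by ring
    _ = _ := by rw [hc, e1, e2, e3]; ring

lemma termA (k j i : ℕ) :
    Aterm k j i - 2 * Aterm k (j+1) i + (1 - X^(j+2)) * Aterm k (j+2) i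
      - C ((k:ℚ)-1) * X^(j+3) * Aterm k (j+3) i
    = Eterm k j i - Eterm k j (i+1) := by
  unfold Aterm
  rw [Eterm_succ]
  unfold Eterm
  have e1 : (X:Q)^((j+1)*i) = X^(j*i) * X^i := by rw [← pow_add]; congr 1; ring
  have e2 : (X:Q)^((j+2)*i) = X^(j*i) * X^i * X^i := by
    rw [← pow_add, ← pow_add]; congr 1; ring
  have e3 : (X:Q)^((j+3)*i) = X^(j*i) * X^i * X^i * X^i := by
    rw [← pow_add, ← pow_add, ← pow_add]; congr 1; ring
  have e4 : (X:Q)^(j+3) = X^(j+2) * X := by rw [pow_succ]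
  rw [e1, e2, e3, e4]
  ring

lemma coeff_hSer_mul (k i n : ℕ) (p : Q) (h : n < i) :
    coeff n (hSer k i * p) = 0 := by
  unfold hSer
  have : (X:Q) ^ (i * (i + 1)) * (∏ m ∈ Finset.Icc 1 i, (1 + C ((k:ℚ)-1) * X ^ m)) * p
      = ((∏ m ∈ Finset.Icc 1 i, (1 + C ((k:ℚ)-1) * X ^ m)) * p) * X ^ (i*(i+1)) := by ring
  rw [this, PowerSeries.coeff_mul_X_pow', if_neg]
  have : i ≤ i * (i+1) := by nlinarith
  omega

lemma coeff_Aterm_zero (k ℓ i n : ℕ) (h : n < i) : coeff n (Aterm k ℓ i) = 0 := by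
  have : Aterm k ℓ i = hSer k i * (X^(ℓ*i) * ((qPoch i)⁻¹)^2) := by unfold Aterm; ring
  rw [this, coeff_hSer_mul k i n _ h]

lemma coeff_Eterm_zero (k j i n : ℕ) (h : n < i) : coeff n (Eterm k j i) = 0 := by
  have : Eterm k j i = hSer k i * (X^(j*i) * ((qPoch i)⁻¹)^2 * (1-X^i)^2) := by
    unfold Eterm; ring
  rw [this, coeff_hSer_mul k i n _ h]

lemma coeff_Aser_eq (k ℓ n N : ℕ) (hN : n + 1 ≤ N) :
    coeff n (Aser k ℓ) = coeff n (∑ i ∈ Finset.range N, Aterm k ℓ i) := by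
  rw [Aser, PowerSeries.coeff_mk, map_sum]
  apply Finset.sum_subset (Finset.range_subset_range.2 hN)
  intro i _ hi
  simp only [Finset.mem_range, not_lt] at hi
  exact coeff_Aterm_zero k ℓ i n (by omega)

lemma coeff_mul_tail (g D : Q) (n : ℕ) (hD : ∀ m, m ≤ n → coeff m D = 0) :
    coeff n (g * D) = 0 := by
  rw [PowerSeries.coeff_mul]
  apply Finset.sum_eq_zero
  intro p hp
  rw [Finset.HasAntidiagonal.mem_antidiagonal] at hp
  rw [hD p.2 (by omega), mul_zero]

lemma coeff_mul_Aser (k ℓ n : ℕ) (g : Q) :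
    coeff n (g * Aser k ℓ) = coeff n (g * ∑ i ∈ Finset.range (n+1), Aterm k ℓ i) := by
  have h0 : coeff n (g * (Aser k ℓ - ∑ i ∈ Finset.range (n+1), Aterm k ℓ i)) = 0 := by
    apply coeff_mul_tail
    intro m hm
    rw [map_sub, coeff_Aser_eq k ℓ m (n+1) (by omega), sub_self]
  rw [mul_sub, map_sub] at h0
  linarith

lemma recA (k : ℕ) : Rec3 k (fun ℓ => Aser k ℓ) := by
  intro j
  apply PowerSeries.ext
  intro n
  rw [map_zero, map_sub, map_add, map_sub]
  have h1 : coeff n (Aser k j) = coeff n ((1:Q) * ∑ i ∈ Finset.range (n+1), Aterm k j i) := by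
    rw [one_mul, coeff_Aser_eq k j n (n+1) le_rfl]
  have h2 := coeff_mul_Aser k (j+1) n (2:Q)
  have h3 := coeff_mul_Aser k (j+2) n (1 - X^(j+2))
  have h4 := coeff_mul_Aser k (j+3) n (C ((k:ℚ)-1) * X^(j+3))
  have key : (1:Q) * (∑ i ∈ Finset.range (n+1), Aterm k j i)
      - 2 * (∑ i ∈ Finset.range (n+1), Aterm k (j+1) i)
      + (1 - X^(j+2)) * (∑ i ∈ Finset.range (n+1), Aterm k (j+2) i)
      - C ((k:ℚ)-1) * X^(j+3) * (∑ i ∈ Finset.range (n+1), Aterm k (j+3) i)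
      = Eterm k j 0 - Eterm k j (n+1) := by
    rw [← Finset.sum_range_sub' (fun i => Eterm k j i) (n+1)]
    rw [Finset.mul_sum, Finset.mul_sum, Finset.mul_sum, Finset.mul_sum]
    rw [← Finset.sum_sub_distrib, ← Finset.sum_add_distrib, ← Finset.sum_sub_distrib]
    apply Finset.sum_congr rfl
    intro i _
    linear_combination termA k j i
  have hE0 : Eterm k j 0 = 0 := by
    unfold Eterm
    simp
  have hEn : coeff n (Eterm k j (n+1)) = 0 := coeff_Eterm_zero k j (n+1) n (by omega)
  rw [h1, h2, h3, h4, ← map_sub, ← map_add, ← map_sub, key, map_sub, hE0, map_zero, hEn]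
  ring


/-- summand of the Bfactor -/
noncomputable def tSer (k m : ℕ) : Q :=
  1 + 2 * ((1 - (X:Q) ^ m)⁻¹) - ((1 + C ((k : ℚ) - 1) * X ^ m)⁻¹)

lemma Bfactor_eq (k ℓ i : ℕ) :
    Bfactor k ℓ i = (ℓ : Q) + ∑ m ∈ Finset.Icc 1 i, tSer k m := rfl

lemma Bfactor_succ (k ℓ i : ℕ) :
    Bfactor k ℓ (i+1) = Bfactor k ℓ i + tSer k (i+1) := by
  rw [Bfactor_eq, Bfactor_eq, Finset.sum_Icc_succ_top (by omega : 1 ≤ i+1)]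
  ring

lemma Bfactor_shift (k j d i : ℕ) :
    Bfactor k (j+d) i = Bfactor k j i + (d : Q) := by
  rw [Bfactor_eq, Bfactor_eq]
  push_cast
  ring

lemma tv (k m : ℕ) (hm : 1 ≤ m) :
    (1 + C ((k:ℚ)-1) * (X:Q)^m) * (tSer k m - 2 * X^m * (1 - (X:Q)^m)⁻¹)
      = 2 + 3 * (C ((k:ℚ)-1) * X^m) := by
  have h1 := inv_cancel_one_sub m hm
  have h2 := inv_cancel_one_add ((k:ℚ)-1) m hm
  unfold tSer
  linear_combination (2 * (1 + C ((k:ℚ)-1) * (X:Q)^m)) * h1 - h2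

/-- the telescoping term for the B recurrence -/
noncomputable def Gterm (k j i : ℕ) : Q :=
  Eterm k j i * (Bfactor k j i - 2 * X^i * (1 - (X:Q)^i)⁻¹)

lemma Gterm_zero (k j : ℕ) : Gterm k j 0 = 0 := by
  unfold Gterm
  rw [show Eterm k j 0 = 0 by unfold Eterm; simp, zero_mul]

lemma Gterm_pos_eq (k j i : ℕ) (hi : 1 ≤ i) :
    Gterm k j i = X^(j*i) * hSer k i * ((qPoch i)⁻¹)^2 *
      ((1 - X^i)^2 * Bfactor k j i - 2 * X^i * (1 - (X:Q)^i)) := by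
  have h1 := inv_cancel_one_sub i hi
  unfold Gterm Eterm
  linear_combination (-2) * (X:Q)^(j*i) * hSer k i * ((qPoch i)⁻¹)^2 * (1-(X:Q)^i) * X^i * h1

lemma Gterm_succ_eq (k j i : ℕ) :
    Gterm k j (i+1) = hSer k i * ((qPoch i)⁻¹)^2 *
      (X^(j*i) * X^i * X^i * X^(j+2)) *
      ((1 + C ((k:ℚ)-1) * (X^i*X)) * Bfactor k j i + (2 + 3 * (C ((k:ℚ)-1) * (X^i*X)))) := by
  have htv := tv k (i+1) (by omega)
  unfold Gterm
  rw [Eterm_succ, Bfactor_succ]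
  linear_combination (hSer k i * ((qPoch i)⁻¹)^2 * ((X:Q)^(j*i) * X^i * X^i * X^(j+2))) * htv

lemma termB0 (k j : ℕ) :
    Bterm k j 0 - 2 * Bterm k (j+1) 0 + (1 - X^(j+2)) * Bterm k (j+2) 0
      - C ((k:ℚ)-1) * X^(j+3) * Bterm k (j+3) 0
    = Gterm k j 0 - Gterm k j 1 := by
  have hB0 : ∀ ℓ : ℕ, Bterm k ℓ 0 = (ℓ : Q) := by
    intro ℓ
    unfold Bterm Aterm Bfactor hSer qPoch
    rw [show Finset.Icc 1 0 = (∅ : Finset ℕ) by rfl]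
    simp
  rw [hB0, hB0, hB0, hB0, Gterm_zero, Gterm_succ_eq]
  have h1 : hSer k 0 = 1 := by unfold hSer; rw [show Finset.Icc 1 0 = (∅ : Finset ℕ) by rfl]; simp
  have h2 : qPoch 0 = 1 := by unfold qPoch; rw [show Finset.Icc 1 0 = (∅ : Finset ℕ) by rfl]; simp
  have h3 : Bfactor k j 0 = (j : Q) := by
    rw [Bfactor_eq, show Finset.Icc 1 0 = (∅ : Finset ℕ) by rfl]; simp
  rw [h1, h2, h3, inv_one]
  have e4 : (X:Q)^(j+3) = X^(j+2) * X := by rw [pow_succ]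
  rw [e4]
  simp only [Nat.mul_zero, pow_zero, one_mul, one_pow]
  push_cast
  ring

lemma termB_pos (k j i : ℕ) (hi : 1 ≤ i) :
    Bterm k j i - 2 * Bterm k (j+1) i + (1 - X^(j+2)) * Bterm k (j+2) i
      - C ((k:ℚ)-1) * X^(j+3) * Bterm k (j+3) i
    = Gterm k j i - Gterm k j (i+1) := by
  have e1 : (X:Q)^((j+1)*i) = X^(j*i) * X^i := by rw [← pow_add]; congr 1; ring
  have e2 : (X:Q)^((j+2)*i) = X^(j*i) * X^i * X^i := by
    rw [← pow_add, ← pow_add]; congr 1; ring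
  have e3 : (X:Q)^((j+3)*i) = X^(j*i) * X^i * X^i * X^i := by
    rw [← pow_add, ← pow_add, ← pow_add]; congr 1; ring
  have e4 : (X:Q)^(j+3) = X^(j+2) * X := by rw [pow_succ]
  have hb1 := Bfactor_shift k j 1 i
  have hb2 := Bfactor_shift k j 2 i
  have hb3 := Bfactor_shift k j 3 i
  unfold Bterm Aterm
  rw [Gterm_pos_eq k j i hi, Gterm_succ_eq, e1, e2, e3, e4, hb1, hb2, hb3]
  push_cast
  ring

lemma coeff_Bterm_zero (k ℓ i n : ℕ) (h : n < i) : coeff n (Bterm k ℓ i) = 0 := by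
  have : Bterm k ℓ i = hSer k i * (X^(ℓ*i) * ((qPoch i)⁻¹)^2 * Bfactor k ℓ i) := by
    unfold Bterm Aterm; ring
  rw [this, coeff_hSer_mul k i n _ h]

lemma coeff_Gterm_zero (k j i n : ℕ) (h : n < i) : coeff n (Gterm k j i) = 0 := by
  have : Gterm k j i = hSer k i * (X^(j*i) * ((qPoch i)⁻¹)^2 * (1-X^i)^2
      * (Bfactor k j i - 2 * X^i * (1 - (X:Q)^i)⁻¹)) := by
    unfold Gterm Eterm; ring
  rw [this, coeff_hSer_mul k i n _ h]

lemma coeff_Bser_eq (k ℓ n N : ℕ) (hN : n + 1 ≤ N) :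
    coeff n (Bser k ℓ) = coeff n (∑ i ∈ Finset.range N, Bterm k ℓ i) := by
  rw [Bser, PowerSeries.coeff_mk, map_sum]
  apply Finset.sum_subset (Finset.range_subset_range.2 hN)
  intro i _ hi
  simp only [Finset.mem_range, not_lt] at hi
  exact coeff_Bterm_zero k ℓ i n (by omega)

lemma coeff_mul_Bser (k ℓ n : ℕ) (g : Q) :
    coeff n (g * Bser k ℓ) = coeff n (g * ∑ i ∈ Finset.range (n+1), Bterm k ℓ i) := by
  have h0 : coeff n (g * (Bser k ℓ - ∑ i ∈ Finset.range (n+1), Bterm k ℓ i)) = 0 := by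
    apply coeff_mul_tail
    intro m hm
    rw [map_sub, coeff_Bser_eq k ℓ m (n+1) (by omega), sub_self]
  rw [mul_sub, map_sub] at h0
  linarith

lemma recB (k : ℕ) : Rec3 k (fun ℓ => Bser k ℓ) := by
  intro j
  apply PowerSeries.ext
  intro n
  rw [map_zero, map_sub, map_add, map_sub]
  have h1 : coeff n (Bser k j) = coeff n ((1:Q) * ∑ i ∈ Finset.range (n+1), Bterm k j i) := by
    rw [one_mul, coeff_Bser_eq k j n (n+1) le_rfl]
  have h2 := coeff_mul_Bser k (j+1) n (2:Q)
  have h3 := coeff_mul_Bser k (j+2) n (1 - X^(j+2))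
  have h4 := coeff_mul_Bser k (j+3) n (C ((k:ℚ)-1) * X^(j+3))
  have key : (1:Q) * (∑ i ∈ Finset.range (n+1), Bterm k j i)
      - 2 * (∑ i ∈ Finset.range (n+1), Bterm k (j+1) i)
      + (1 - X^(j+2)) * (∑ i ∈ Finset.range (n+1), Bterm k (j+2) i)
      - C ((k:ℚ)-1) * X^(j+3) * (∑ i ∈ Finset.range (n+1), Bterm k (j+3) i)
      = Gterm k j 0 - Gterm k j (n+1) := by
    rw [← Finset.sum_range_sub' (fun i => Gterm k j i) (n+1)]
    rw [Finset.mul_sum, Finset.mul_sum, Finset.mul_sum, Finset.mul_sum]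
    rw [← Finset.sum_sub_distrib, ← Finset.sum_add_distrib, ← Finset.sum_sub_distrib]
    apply Finset.sum_congr rfl
    intro i _
    match i with
    | 0 => linear_combination termB0 k j
    | (i'+1) => linear_combination termB_pos k j (i'+1) (by omega)
  have hEn : coeff n (Gterm k j (n+1)) = 0 := coeff_Gterm_zero k j (n+1) n (by omega)
  rw [h1, h2, h3, h4, ← map_sub, ← map_add, ← map_sub, key, map_sub, Gterm_zero, map_zero, hEn]
  ring

lemma Lop1_eq (k : ℕ) (Z : ℕ → Q) :
    Lop k Z 1 = Z 1 - ((C (2*(k:ℚ)-1)) * X^1 * Z 1 + (C ((k:ℚ)-1)) * X^2 * Z 2) := by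
  unfold Lop
  rw [show Finset.Icc 1 2 = {1, 2} by rfl]
  rw [Finset.sum_insert (by decide), Finset.sum_singleton]
  have w1 : wq k 1 1 = 2*(k:ℚ)-1 := by unfold wq; push_cast; ring
  have w2 : wq k 1 2 = (k:ℚ)-1 := by unfold wq; push_cast; ring
  rw [w1, w2]

lemma Lop2_eq (k : ℕ) (Z : ℕ → Q) :
    Lop k Z 2 = Z 2 - ((C (3*(k:ℚ)-1)) * X^1 * Z 1 + ((C (2*(k:ℚ)-1)) * X^2 * Z 2
      + (C ((k:ℚ)-1)) * X^3 * Z 3)) := by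
  unfold Lop
  rw [show Finset.Icc 1 3 = {1, 2, 3} by rfl]
  rw [Finset.sum_insert (by decide), Finset.sum_insert (by decide), Finset.sum_singleton]
  have w1 : wq k 2 1 = 3*(k:ℚ)-1 := by unfold wq; push_cast; ring
  have w2 : wq k 2 2 = 2*(k:ℚ)-1 := by unfold wq; push_cast; ring
  have w3 : wq k 2 3 = (k:ℚ)-1 := by unfold wq; push_cast; ring
  rw [w1, w2, w3]

end RCT
end

namespace RCC

lemma mem_colsSet {b : Blk} {x : ℤ} :
    x ∈ b.colsSet ↔ b.left ≤ x ∧ x < b.left + b.width := Set.mem_Ico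

lemma mem_cells {b : Blk} {p : ℤ × ℕ} :
    p ∈ b.cells ↔ (b.left ≤ p.1 ∧ p.1 < b.left + b.width) ∧ p.2 = b.height := by
  rw [Blk.cells, Set.mem_prod, Set.mem_singleton_iff, Blk.colsSet, Set.mem_Ico]

lemma disj_cells_iff {k : ℕ} (hk : 1 ≤ k) {b b' : Blk}
    (hb : b.width = k) (hb' : b'.width = k) :
    Disjoint b.cells b'.cells ↔
      b.height ≠ b'.height ∨ b.left + (k:ℤ) ≤ b'.left ∨ b'.left + (k:ℤ) ≤ b.left := by
  rw [Set.disjoint_left]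
  constructor
  · intro h
    by_contra hc
    push_neg at hc
    obtain ⟨hh, h1, h2⟩ := hc
    have hm1 : (max b.left b'.left, b.height) ∈ b.cells := by
      rw [mem_cells, hb]
      refine ⟨⟨le_max_left _ _, ?_⟩, rfl⟩
      omega
    have hm2 : (max b.left b'.left, b.height) ∈ b'.cells := by
      rw [mem_cells, hb']
      refine ⟨⟨le_max_right _ _, ?_⟩, hh⟩
      omega
    exact h hm1 hm2
  · rintro (hh | hle | hle) p hp hp' <;>
    · rw [mem_cells, hb] at hp
      rw [mem_cells, hb'] at hp'
      omega

/-- block number `m` of a bottom row starting at `a` -/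
def blkm (k : ℕ) (a : ℤ) (m : ℕ) : Blk := ⟨a + m*k, 0, k⟩

lemma blkm_inj {k : ℕ} (hk : 1 ≤ k) (a : ℤ) : Function.Injective (blkm k a) := by
  intro m m' h
  simp only [blkm, Blk.mk.injEq] at h
  have := h.1
  have hk' : (0:ℤ) < k := by exact_mod_cast hk
  nlinarith [this]

/-- structure of a disjoint row-convex row of width-k blocks at height 0 -/
lemma rowStruct {k : ℕ} (hk : 1 ≤ k) :
    ∀ (i : ℕ) (R : Finset Blk), R.card = i →
    (∀ b ∈ R, b.width = k ∧ b.height = 0) →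
    ((R : Set Blk).Pairwise fun a b => Disjoint a.cells b.cells) →
    (∀ x y z : ℤ, (∃ b ∈ R, x ∈ b.colsSet) → (∃ b ∈ R, z ∈ b.colsSet) →
      x ≤ y → y ≤ z → (∃ b ∈ R, y ∈ b.colsSet)) →
    ∃ a : ℤ, R = (Finset.range i).image (blkm k a) := by
  intro i
  induction i with
  | zero =>
    intro R hcard _ _ _
    exact ⟨0, by simp [Finset.card_eq_zero.1 hcard]⟩
  | succ i ih =>
    intro R hcard hwh hdis hconv
    have hne : R.Nonempty := Finset.card_pos.1 (by omega)
    -- minimal left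
    have hLne : (R.image Blk.left).Nonempty := hne.image _
    set a := (R.image Blk.left).min' hLne with ha
    obtain ⟨b0, hb0R, hb0l⟩ : ∃ b ∈ R, b.left = a := by
      have := (R.image Blk.left).min'_mem hLne
      rw [← ha] at this
      obtain ⟨b, hb, hbl⟩ := Finset.mem_image.1 this
      exact ⟨b, hb, hbl⟩
    have hmin : ∀ b ∈ R, a ≤ b.left := by
      intro b hb
      exact Finset.min'_le _ _ (Finset.mem_image_of_mem _ hb)
    have hb0 : b0 = blkm k a 0 := by
      obtain ⟨hw, hh⟩ := hwh b0 hb0R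
      cases b0
      simp_all [blkm]
    set R' := R.erase b0 with hR'
    have hcard' : R'.card = i := by
      rw [hR', Finset.card_erase_of_mem hb0R, hcard]
      omega
    -- all other blocks are at least a+k
    have hsep : ∀ b ∈ R', a + (k:ℤ) ≤ b.left := by
      intro b hb
      have hbR : b ∈ R := Finset.mem_of_mem_erase hb
      have hbne : b ≠ b0 := Finset.ne_of_mem_erase hb
      have hd : Disjoint b.cells b0.cells := hdis (Finset.mem_coe.2 hbR) (Finset.mem_coe.2 hb0R) hbne
      rw [disj_cells_iff hk (hwh b hbR).1 (hwh b0 hb0R).1] at hd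
      have h1 := (hwh b hbR).2
      have h2 := (hwh b0 hb0R).2
      have h3 := hmin b hbR
      rcases hd with hh | hle | hle
      · omega
      · have hk' : (1:ℤ) ≤ k := by exact_mod_cast hk
        omega
      · omega
    -- R' satisfies the hypotheses
    have hwh' : ∀ b ∈ R', b.width = k ∧ b.height = 0 :=
      fun b hb => hwh b (Finset.mem_of_mem_erase hb)
    have hdis' : ((R' : Set Blk)).Pairwise fun a b => Disjoint a.cells b.cells :=
      Set.Pairwise.mono (by intro x hx; exact Finset.mem_of_mem_erase hx) hdis
    have hmemcols : ∀ x : ℤ, (∃ b ∈ R', x ∈ b.colsSet) ↔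
        ((∃ b ∈ R, x ∈ b.colsSet) ∧ a + k ≤ x) := by
      intro x
      constructor
      · rintro ⟨b, hb, hx⟩
        refine ⟨⟨b, Finset.mem_of_mem_erase hb, hx⟩, ?_⟩
        have := hsep b hb
        rw [mem_colsSet] at hx
        omega
      · rintro ⟨⟨b, hb, hx⟩, hax⟩
        by_cases hbb : b = b0
        · rw [hbb, hb0] at hx
          rw [mem_colsSet] at hx
          simp only [blkm] at hx
          push_cast at hx
          omega
        · exact ⟨b, Finset.mem_erase.2 ⟨hbb, hb⟩, hx⟩
    have hconv' : ∀ x y z : ℤ, (∃ b ∈ R', x ∈ b.colsSet) → (∃ b ∈ R', z ∈ b.colsSet) →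
        x ≤ y → y ≤ z → (∃ b ∈ R', y ∈ b.colsSet) := by
      intro x y z hx hz hxy hyz
      rw [hmemcols] at hx hz ⊢
      exact ⟨hconv x y z hx.1 hz.1 hxy hyz, by omega⟩
    obtain ⟨a', hrep⟩ := ih R' hcard' hwh' hdis' hconv'
    -- if R' is empty we are done
    rcases Nat.eq_zero_or_pos i with hi0 | hipos
    · subst hi0
      obtain ⟨x, hx⟩ := Finset.card_eq_one.1 (by omega : R.card = 1)
      have hbx : b0 = x := by
        rw [hx] at hb0R
        simpa using hb0R
      refine ⟨a, ?_⟩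
      rw [hx, ← hbx, hb0]
      simp
    · -- claim a' = a + k
      have hb1 : blkm k a' 0 ∈ R' := by
        rw [hrep]
        exact Finset.mem_image_of_mem _ (Finset.mem_range.2 hipos)
      have ha'1 : a + k ≤ a' := by
        have := hsep _ hb1
        simpa [blkm] using this
      have ha'2 : a' ≤ a + k := by
        by_contra hcon
        push_neg at hcon
        -- y = a + k is in the row but in no block
        have hxmem : ∃ b ∈ R, (a + (k:ℤ) - 1) ∈ b.colsSet := by
          refine ⟨b0, hb0R, ?_⟩
          rw [hb0, mem_colsSet]
          simp only [blkm]
          have hk' : (1:ℤ) ≤ k := by exact_mod_cast hk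
          push_cast
          omega
        have hzmem : ∃ b ∈ R, (a' : ℤ) ∈ b.colsSet := by
          obtain ⟨b, hb, hx⟩ : ∃ b ∈ R', (a' : ℤ) ∈ b.colsSet := by
            refine ⟨blkm k a' 0, hb1, ?_⟩
            rw [mem_colsSet]
            simp only [blkm]
            have hk' : (1:ℤ) ≤ k := by exact_mod_cast hk
            push_cast
            omega
          exact ⟨b, Finset.mem_of_mem_erase hb, hx⟩
        obtain ⟨b, hb, hyb⟩ := hconv _ (a+k) _ hxmem hzmem (by omega) (by omega)
        by_cases hbb : b = b0
        · rw [hbb, hb0, mem_colsSet] at hyb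
          simp only [blkm] at hyb
          push_cast at hyb
          omega
        · have hbR' : b ∈ R' := Finset.mem_erase.2 ⟨hbb, hb⟩
          have h1 := hsep b hbR'
          rw [mem_colsSet] at hyb
          have h2 : b.left = a + k := by
            have := (hwh b hb).1
            omega
          -- but b ∈ R' has left = a' + m k ≥ a' > a + k
          rw [hrep] at hbR'
          obtain ⟨m, hm, hbm⟩ := Finset.mem_image.1 hbR'
          rw [← hbm] at h2
          simp only [blkm] at h2
          have : (0:ℤ) ≤ (m:ℤ) * k := by positivity
          omega
      have ha' : a' = a + k := le_antisymm ha'2 ha'1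
      refine ⟨a, ?_⟩
      -- R = insert b0 R', and the image splits off m = 0
      have hR : R = insert b0 R' := by
        rw [hR', Finset.insert_erase hb0R]
      rw [hR, hrep, ha']
      ext b
      simp only [Finset.mem_insert, Finset.mem_image, Finset.mem_range]
      constructor
      · rintro (rfl | ⟨m, hm, rfl⟩)
        · exact ⟨0, by omega, by rw [hb0]⟩
        · refine ⟨m+1, by omega, ?_⟩
          simp only [blkm, Blk.mk.injEq]
          push_cast
          constructor
          · ring
          · simp
      · rintro ⟨m, hm, rfl⟩
        rcases Nat.eq_zero_or_pos m with rfl | hmpos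
        · left; rw [hb0]
        · right
          refine ⟨m-1, by omega, ?_⟩
          simp only [blkm, Blk.mk.injEq]
          push_cast
          have : ((m:ℤ) - 1) * k = m*k - k := by ring
          constructor
          · have hm1 : ((m-1 : ℕ) : ℤ) = (m:ℤ) - 1 := by omega
            rw [hm1]
            ring
          · simp

def shiftUp (a : ℤ) (b : Blk) : Blk := ⟨b.left + a, b.height + 1, b.width⟩
def shiftDown (a : ℤ) (b : Blk) : Blk := ⟨b.left - a, b.height - 1, b.width⟩

lemma shiftUp_inj (a : ℤ) : Function.Injective (shiftUp a) := by
  intro b b' h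
  cases b; cases b'
  simp only [shiftUp, Blk.mk.injEq] at h
  simp only [Blk.mk.injEq]
  omega

def bottomRow (k : ℕ) (a : ℤ) (i : ℕ) : Finset Blk := (Finset.range i).image (blkm k a)

def reconF (k : ℕ) (a : ℤ) (i : ℕ) (T' : Finset Blk) : Finset Blk :=
  bottomRow k a i ∪ T'.image (shiftUp a)

lemma mem_bottomRow {k : ℕ} {a : ℤ} {i : ℕ} {b : Blk} :
    b ∈ bottomRow k a i ↔ ∃ m, m < i ∧ b = blkm k a m := by
  simp [bottomRow, eq_comm]

lemma mem_reconF {k : ℕ} {a : ℤ} {i : ℕ} {T' : Finset Blk} {b : Blk} :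
    b ∈ reconF k a i T' ↔ (∃ m, m < i ∧ b = blkm k a m) ∨ (∃ c ∈ T', b = shiftUp a c) := by
  simp [reconF, mem_bottomRow, eq_comm]

lemma mul_mono_k {m i : ℕ} (k : ℕ) (h : m < i) : ((m:ℤ)+1) * k ≤ (i:ℤ) * k := by
  have h1 : ((m:ℤ)+1) ≤ i := by exact_mod_cast h
  exact mul_le_mul_of_nonneg_right h1 (by positivity)

lemma mul_nonneg_k (m k : ℕ) : (0:ℤ) ≤ (m:ℤ) * k := by positivity

lemma cover {k i : ℕ} (hk : 1 ≤ k) {x : ℤ} (h0 : 0 ≤ x) (h1 : x < (i:ℤ) * k) :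
    ∃ m : ℕ, m < i ∧ (m:ℤ)*k ≤ x ∧ x < (m:ℤ)*k + k := by
  have hkz : (0:ℤ) < k := by exact_mod_cast hk
  set q := x / (k:ℤ) with hq
  have hdm := Int.mul_ediv_add_emod x (k:ℤ)
  have hr0 : 0 ≤ x % (k:ℤ) := Int.emod_nonneg x (by omega)
  have hr1 : x % (k:ℤ) < k := Int.emod_lt_of_pos x hkz
  have hq0 : 0 ≤ q := Int.ediv_nonneg h0 (by omega)
  have hqi : q < i := by
    by_contra hcon
    push_neg at hcon
    have : (i:ℤ) * k ≤ q * k := mul_le_mul_of_nonneg_right hcon (by positivity)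
    nlinarith
  refine ⟨q.toNat, ?_, ?_, ?_⟩
  · omega
  · rw [Int.toNat_of_nonneg hq0]
    nlinarith
  · rw [Int.toNat_of_nonneg hq0]
    nlinarith

lemma mem_colsAt {T : Finset Blk} {h : ℕ} {x : ℤ} :
    x ∈ colsAt T h ↔ ∃ b ∈ T, b.height = h ∧ x ∈ b.colsSet := Iff.rfl

lemma colsAt_reconF_zero {k : ℕ} (hk : 1 ≤ k) {a : ℤ} {i : ℕ} {T' : Finset Blk} {x : ℤ} :
    x ∈ colsAt (reconF k a i T') 0 ↔ a ≤ x ∧ x < a + (i:ℤ)*k := by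
  rw [mem_colsAt]
  constructor
  · rintro ⟨b, hb, hh, hx⟩
    rw [mem_reconF] at hb
    rcases hb with ⟨m, hm, rfl⟩ | ⟨c, hc, rfl⟩
    · rw [mem_colsSet] at hx
      simp only [blkm] at hx hh ⊢
      have h1 : (m:ℤ)*↑k + ↑k ≤ (i:ℤ)*↑k := by nlinarith [mul_mono_k k hm]
      have h2 := mul_nonneg_k m k
      push_cast at hx
      exact ⟨by linarith, by linarith⟩
    · simp [shiftUp] at hh
  · rintro ⟨hxa, hxi⟩
    obtain ⟨m, hm, hm1, hm2⟩ := cover (i := i) hk (x := x - a) (by omega) (by linarith)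
    refine ⟨blkm k a m, ?_, rfl, ?_⟩
    · rw [mem_reconF]
      exact Or.inl ⟨m, hm, rfl⟩
    · rw [mem_colsSet]
      simp only [blkm]
      push_cast
      omega

lemma colsAt_reconF_succ {k : ℕ} {a : ℤ} {i h : ℕ} {T' : Finset Blk} {x : ℤ} :
    x ∈ colsAt (reconF k a i T') (h+1) ↔ (x - a) ∈ colsAt T' h := by
  rw [mem_colsAt, mem_colsAt]
  constructor
  · rintro ⟨b, hb, hh, hx⟩
    rw [mem_reconF] at hb
    rcases hb with ⟨m, hm, rfl⟩ | ⟨c, hc, rfl⟩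
    · simp [blkm] at hh
    · refine ⟨c, hc, ?_, ?_⟩
      · simp only [shiftUp] at hh
        omega
      · rw [mem_colsSet] at hx ⊢
        simp only [shiftUp] at hx
        omega
  · rintro ⟨c, hc, hh, hx⟩
    refine ⟨shiftUp a c, ?_, ?_, ?_⟩
    · rw [mem_reconF]; exact Or.inr ⟨c, hc, rfl⟩
    · simp only [shiftUp]; omega
    · rw [mem_colsSet] at hx ⊢
      simp only [shiftUp]
      omega

lemma recon_is {k j i : ℕ} {a : ℤ} {T' : Finset Blk} (hk : 1 ≤ k) (hj : 1 ≤ j)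
    (hi : 1 ≤ i) (hT' : IsPlatformRC k i T')
    (ha1 : 1 ≤ a + (k:ℤ)) (ha2 : a + (i:ℤ)*k ≤ (j:ℤ)*k + k - 1) :
    IsPlatformRC k j (reconF k a i T') := by
  obtain ⟨hw', hd', hs', hr', hp'⟩ := hT'
  have hkz : (1:ℤ) ≤ (k:ℤ) := by exact_mod_cast hk
  have hik : (k:ℤ) ≤ (i:ℤ)*k := by
    have := mul_mono_k k (show 0 < i by omega)
    push_cast at this ⊢
    linarith
  have hjk : (k:ℤ) ≤ (j:ℤ)*k := by
    have := mul_mono_k k (show 0 < j by omega)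
    push_cast at this ⊢
    linarith
  refine ⟨?_, ?_, ?_, ?_, ?_⟩
  · -- widths
    intro b hb
    rw [mem_reconF] at hb
    rcases hb with ⟨m, _, rfl⟩ | ⟨c, hc, rfl⟩
    · rfl
    · exact hw' c hc
  · -- disjoint cells
    intro b hb b' hb' hne
    rw [Finset.mem_coe, mem_reconF] at hb hb'
    have hwidth : ∀ c, c ∈ reconF k a i T' → c.width = k := by
      intro c hc
      rw [mem_reconF] at hc
      rcases hc with ⟨m, _, rfl⟩ | ⟨c', hc', rfl⟩
      · rfl
      · exact hw' c' hc'
    rcases hb with ⟨m, hm, rfl⟩ | ⟨c, hc, rfl⟩ <;> rcases hb' with ⟨m', hm', rfl⟩ | ⟨c', hc', rfl⟩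
    · -- bottom, bottom
      rw [disj_cells_iff hk rfl rfl]
      right
      have hmm : m ≠ m' := fun h => hne (by rw [h])
      simp only [blkm]
      rcases Nat.lt_or_ge m m' with hlt | hge
      · left
        have := mul_mono_k k hlt
        push_cast at this ⊢
        nlinarith
      · right
        have hlt : m' < m := by omega
        have := mul_mono_k k hlt
        push_cast at this ⊢
        nlinarith
    · rw [disj_cells_iff hk rfl (show (shiftUp a c').width = k from hw' c' hc')]
      left
      simp [blkm, shiftUp]
    · rw [disj_cells_iff hk (show (shiftUp a c).width = k from hw' c hc) rfl]
      left
      simp [blkm, shiftUp]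
    · -- up, up
      have hcc : c ≠ c' := fun h => hne (by rw [h])
      have hd : Disjoint c.cells c'.cells :=
        hd' (Finset.mem_coe.2 hc) (Finset.mem_coe.2 hc') hcc
      rw [disj_cells_iff hk (hw' c hc) (hw' c' hc')] at hd
      rw [disj_cells_iff hk (show (shiftUp a c).width = k from hw' c hc)
        (show (shiftUp a c').width = k from hw' c' hc')]
      simp only [shiftUp]
      rcases hd with h | h | h
      · left; omega
      · right; left; omega
      · right; right; omega
  · -- supported
    intro b hb h hbh
    rw [mem_reconF] at hb
    rcases hb with ⟨m, hm, rfl⟩ | ⟨c, hc, rfl⟩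
    · simp [blkm] at hbh
    · simp only [shiftUp] at hbh
      have hch : c.height = h := by omega
      rcases Nat.eq_zero_or_pos h with rfl | hpos
      · -- supported by the bottom row
        obtain ⟨x, hx, hx0, hxik⟩ := hp' c hc hch
        obtain ⟨m, hm, hm1, hm2⟩ := cover (i := i) hk hx0 (by push_cast at hxik ⊢; linarith)
        refine ⟨blkm k a m, ?_, rfl, x + a, ?_, ?_⟩
        · rw [mem_reconF]; exact Or.inl ⟨m, hm, rfl⟩
        · rw [mem_colsSet] at hx ⊢
          simp only [shiftUp]
          omega
        · rw [mem_colsSet]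
          simp only [blkm]
          push_cast
          omega
      · obtain ⟨h', rfl⟩ : ∃ h', h = h' + 1 := ⟨h - 1, by omega⟩
        obtain ⟨c'', hc'', hch'', x, hx1, hx2⟩ := hs' c hc h' (by omega)
        refine ⟨shiftUp a c'', ?_, ?_, x + a, ?_, ?_⟩
        · rw [mem_reconF]; exact Or.inr ⟨c'', hc'', rfl⟩
        · simp only [shiftUp]; omega
        · rw [mem_colsSet] at hx1 ⊢
          simp only [shiftUp]
          omega
        · rw [mem_colsSet] at hx2 ⊢
          simp only [shiftUp]
          omega
  · -- row convex
    intro h x y z hx hz hxy hyz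
    rcases Nat.eq_zero_or_pos h with rfl | hpos
    · rw [colsAt_reconF_zero hk] at hx hz ⊢
      omega
    · obtain ⟨h', rfl⟩ : ∃ h', h = h' + 1 := ⟨h - 1, by omega⟩
      rw [colsAt_reconF_succ] at hx hz ⊢
      exact hr' h' (x - a) (y - a) (z - a) hx hz (by omega) (by omega)
  · -- platform
    intro b hb hbh
    rw [mem_reconF] at hb
    rcases hb with ⟨m, hm, rfl⟩ | ⟨c, hc, rfl⟩
    · refine ⟨max (a + (m:ℤ)*k) 0, ?_, ?_, ?_⟩
      · rw [mem_colsSet]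
        simp only [blkm]
        have h2 := mul_nonneg_k m k
        push_cast
        exact ⟨le_max_left _ _, max_lt (by linarith) (by linarith)⟩
      · exact le_max_right _ _
      · have h1 : (m:ℤ)*↑k + ↑k ≤ (i:ℤ)*↑k := by nlinarith [mul_mono_k k hm]
        have h2 := mul_nonneg_k m k
        have h3 : a + (m:ℤ)*↑k < (j:ℤ)*↑k := by linarith
        have h4 : (0:ℤ) < (j:ℤ)*↑k := by linarith
        push_cast
        exact max_lt h3 h4
    · simp [shiftUp] at hbh

lemma card_bottomRow {k : ℕ} (hk : 1 ≤ k) (a : ℤ) (i : ℕ) :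
    (bottomRow k a i).card = i := by
  rw [bottomRow, Finset.card_image_of_injective _ (blkm_inj hk a), Finset.card_range]

lemma bottom_up_disj {k : ℕ} (a : ℤ) (i : ℕ) (T' : Finset Blk) :
    Disjoint (bottomRow k a i) (T'.image (shiftUp a)) := by
  rw [Finset.disjoint_left]
  intro b hb hb'
  rw [mem_bottomRow] at hb
  obtain ⟨m, _, rfl⟩ := hb
  obtain ⟨c, _, hc⟩ := Finset.mem_image.1 hb'
  simp [blkm, shiftUp] at hc

lemma recon_card {k : ℕ} (hk : 1 ≤ k) (a : ℤ) (i : ℕ) (T' : Finset Blk) :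
    (reconF k a i T').card = i + T'.card := by
  rw [reconF, Finset.card_union_of_disjoint (bottom_up_disj a i T'), card_bottomRow hk,
    Finset.card_image_of_injective _ (shiftUp_inj a)]

lemma exists_height0 (T : Finset Blk) (hs : supported T) (hne : T.Nonempty) :
    ∃ b ∈ T, b.height = 0 := by
  have hH := (T.image Blk.height).min'_mem (hne.image _)
  set h0 := (T.image Blk.height).min' (hne.image _) with hh0
  obtain ⟨b, hb, hbh⟩ := Finset.mem_image.1 hH
  rcases Nat.eq_zero_or_pos h0 with h | h
  · exact ⟨b, hb, by omega⟩
  · obtain ⟨b', hb', hb'h, _⟩ := hs b hb (h0 - 1) (by omega)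
    have := Finset.min'_le (T.image Blk.height) b'.height (Finset.mem_image_of_mem _ hb')
    omega

lemma shiftUp_shiftDown (a : ℤ) (b : Blk) (h : b.height ≠ 0) :
    shiftUp a (shiftDown a b) = b := by
  cases b
  simp only [shiftUp, shiftDown, Blk.mk.injEq]
  constructor
  · ring
  · simp_all
    omega

lemma decomp {k j : ℕ} (hk : 1 ≤ k) (hj : 1 ≤ j) (T : Finset Blk)
    (hT : IsPlatformRC k j T) (hne : T.Nonempty) :
    ∃ (i : ℕ) (a : ℤ) (T' : Finset Blk),
      1 ≤ i ∧ i ≤ j + 1 ∧ i ≤ T.card ∧ 1 ≤ a + (k:ℤ) ∧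
      a + (i:ℤ)*k ≤ (j:ℤ)*k + k - 1 ∧
      IsPlatformRC k i T' ∧ T'.card = T.card - i ∧ T = reconF k a i T' := by
  classical
  obtain ⟨hw, hd, hs, hr, hp⟩ := hT
  have hkz : (1:ℤ) ≤ (k:ℤ) := by exact_mod_cast hk
  set R := T.filter (fun b => b.height = 0) with hR
  have hRne : R.Nonempty := by
    obtain ⟨b, hb, hbh⟩ := exists_height0 T hs hne
    exact ⟨b, Finset.mem_filter.2 ⟨hb, hbh⟩⟩
  set i := R.card with hi
  have hipos : 1 ≤ i := Finset.card_pos.2 hRne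
  have hcols0 : ∀ x : ℤ, (∃ b ∈ R, x ∈ b.colsSet) ↔ x ∈ colsAt T 0 := by
    intro x
    rw [mem_colsAt]
    constructor
    · rintro ⟨b, hb, hx⟩
      obtain ⟨hbT, hbh⟩ := Finset.mem_filter.1 hb
      exact ⟨b, hbT, hbh, hx⟩
    · rintro ⟨b, hb, hbh, hx⟩
      exact ⟨b, Finset.mem_filter.2 ⟨hb, hbh⟩, hx⟩
  obtain ⟨a, hrep⟩ := rowStruct hk i R rfl
    (fun b hb => ⟨hw b (Finset.mem_filter.1 hb).1, (Finset.mem_filter.1 hb).2⟩)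
    (Set.Pairwise.mono (fun x hx => Finset.mem_coe.2
      (Finset.filter_subset _ _ (Finset.mem_coe.1 hx))) hd)
    (by
      intro x y z hx hz hxy hyz
      rw [hcols0] at hx hz ⊢
      exact hr 0 x y z hx hz hxy hyz)
  have hmemR : ∀ m, m < i → blkm k a m ∈ R := by
    intro m hm
    rw [hrep]
    exact Finset.mem_image_of_mem _ (Finset.mem_range.2 hm)
  have hmemT : ∀ m, m < i → blkm k a m ∈ T := fun m hm =>
    (Finset.mem_filter.1 (hmemR m hm)).1
  -- bounds
  have hbound0 := hp (blkm k a 0) (hmemT 0 hipos) rfl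
  have ha1 : 1 ≤ a + (k:ℤ) := by
    obtain ⟨x, hx, hx0, _⟩ := hbound0
    rw [mem_colsSet] at hx
    simp only [blkm] at hx
    push_cast at hx
    omega
  have hboundi := hp (blkm k a (i-1)) (hmemT (i-1) (by omega)) rfl
  have ha2 : a + (i:ℤ)*k ≤ (j:ℤ)*k + k - 1 := by
    obtain ⟨x, hx, _, hxjk⟩ := hboundi
    rw [mem_colsSet] at hx
    simp only [blkm] at hx
    have hcast : ((i - 1 : ℕ) : ℤ) = (i:ℤ) - 1 := by omega
    rw [hcast] at hx
    have he : ((i:ℤ) - 1) * k = (i:ℤ)*k - k := by ring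
    push_cast at hx hxjk
    linarith [hx.1, hx.2, he]
  have hij : i ≤ j + 1 := by
    by_contra hcon
    push_neg at hcon
    have : ((j:ℤ)+2) * k ≤ (i:ℤ) * k := by
      have : ((j:ℤ)+2) ≤ (i:ℤ) := by exact_mod_cast hcon
      exact mul_le_mul_of_nonneg_right this (by positivity)
    nlinarith
  have hicard : i ≤ T.card := by
    rw [hi, hR]
    exact Finset.card_filter_le _ _
  -- the shifted upper part
  set F1 := T.filter (fun b => ¬ b.height = 0) with hF1
  set T' := F1.image (shiftDown a) with hT'
  have hF1h : ∀ b ∈ F1, b.height ≠ 0 := fun b hb => (Finset.mem_filter.1 hb).2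
  have hF1T : ∀ b ∈ F1, b ∈ T := fun b hb => (Finset.mem_filter.1 hb).1
  have hinj : Set.InjOn (shiftDown a) F1 := by
    intro b hb b' hb' h
    have h1 := hF1h b hb
    have h2 := hF1h b' hb'
    cases b; cases b'
    simp only [shiftDown, Blk.mk.injEq] at h
    simp only [Blk.mk.injEq]
    simp only [] at h1 h2
    omega
  have hcard' : T'.card = T.card - i := by
    rw [hT', Finset.card_image_of_injOn hinj]
    have h2 : R.card + F1.card = T.card := by
      rw [hR, hF1]
      exact Finset.card_filter_add_card_filter_not (s := T) (p := fun b : Blk => b.height = 0)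
    omega
  have hmemT' : ∀ c, c ∈ T' ↔ ∃ b ∈ F1, c = shiftDown a b := by
    intro c
    rw [hT']
    simp [eq_comm]
  have hcolsT' : ∀ h (x : ℤ), x ∈ colsAt T' h ↔ (x + a) ∈ colsAt T (h+1) := by
    intro h x
    rw [mem_colsAt, mem_colsAt]
    constructor
    · rintro ⟨c, hc, hch, hx⟩
      obtain ⟨b, hb, rfl⟩ := (hmemT' c).1 hc
      refine ⟨b, hF1T b hb, ?_, ?_⟩
      · have := hF1h b hb
        simp only [shiftDown] at hch
        omega
      · rw [mem_colsSet] at hx ⊢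
        simp only [shiftDown] at hx
        omega
    · rintro ⟨b, hb, hbh, hx⟩
      have hbF1 : b ∈ F1 := Finset.mem_filter.2 ⟨hb, by omega⟩
      refine ⟨shiftDown a b, (hmemT' _).2 ⟨b, hbF1, rfl⟩, ?_, ?_⟩
      · simp only [shiftDown]; omega
      · rw [mem_colsSet] at hx ⊢
        simp only [shiftDown]
        omega
  have hT'is : IsPlatformRC k i T' := by
    refine ⟨?_, ?_, ?_, ?_, ?_⟩
    · intro c hc
      obtain ⟨b, hb, rfl⟩ := (hmemT' c).1 hc
      exact hw b (hF1T b hb)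
    · intro c hc c' hc' hne'
      obtain ⟨b, hb, rfl⟩ := (hmemT' c).1 (Finset.mem_coe.1 hc)
      obtain ⟨b', hb', rfl⟩ := (hmemT' c').1 (Finset.mem_coe.1 hc')
      have hbb : b ≠ b' := fun h => hne' (by rw [h])
      have hdisj : Disjoint b.cells b'.cells :=
        hd (Finset.mem_coe.2 (hF1T b hb)) (Finset.mem_coe.2 (hF1T b' hb')) hbb
      rw [disj_cells_iff hk (hw b (hF1T b hb)) (hw b' (hF1T b' hb'))] at hdisj
      rw [disj_cells_iff hk
        (show (shiftDown a b).width = k from hw b (hF1T b hb))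
        (show (shiftDown a b').width = k from hw b' (hF1T b' hb'))]
      have h1 := hF1h b hb
      have h2 := hF1h b' hb'
      simp only [shiftDown]
      rcases hdisj with h | h | h
      · left; omega
      · right; left; omega
      · right; right; omega
    · intro c hc h hch
      obtain ⟨b, hb, rfl⟩ := (hmemT' c).1 hc
      have h1 := hF1h b hb
      have hbh : b.height = h + 2 := by
        simp only [shiftDown] at hch
        omega
      obtain ⟨b'', hb'', hb''h, x, hx1, hx2⟩ := hs b (hF1T b hb) (h+1) hbh
      have hb''F1 : b'' ∈ F1 := Finset.mem_filter.2 ⟨hb'', by omega⟩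
      refine ⟨shiftDown a b'', (hmemT' _).2 ⟨b'', hb''F1, rfl⟩, ?_, x - a, ?_, ?_⟩
      · simp only [shiftDown]; omega
      · rw [mem_colsSet] at hx1 ⊢
        simp only [shiftDown]
        omega
      · rw [mem_colsSet] at hx2 ⊢
        simp only [shiftDown]
        omega
    · intro h x y z hx hz hxy hyz
      rw [hcolsT'] at hx hz ⊢
      exact hr (h+1) (x+a) (y+a) (z+a) hx hz (by omega) (by omega)
    · intro c hc hch
      obtain ⟨b, hb, rfl⟩ := (hmemT' c).1 hc
      have h1 := hF1h b hb
      have hbh : b.height = 1 := by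
        simp only [shiftDown] at hch
        omega
      obtain ⟨b0, hb0, hb0h, x, hx1, hx2⟩ := hs b (hF1T b hb) 0 hbh
      have hb0R : b0 ∈ R := Finset.mem_filter.2 ⟨hb0, hb0h⟩
      rw [hrep] at hb0R
      obtain ⟨m, hm, rfl⟩ := Finset.mem_image.1 hb0R
      rw [Finset.mem_range] at hm
      rw [mem_colsSet] at hx1 hx2
      simp only [blkm] at hx2
      push_cast at hx2
      have hmul1 : (m:ℤ)*↑k + ↑k ≤ (i:ℤ)*↑k := by nlinarith [mul_mono_k k hm]
      have hmul2 := mul_nonneg_k m k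
      refine ⟨x - a, ?_, by linarith, by linarith⟩
      rw [mem_colsSet]
      simp only [shiftDown]
      omega
  -- reconstruction
  have hbottom : bottomRow k a i = R := by
    rw [bottomRow, hrep]
  have hup : T'.image (shiftUp a) = F1 := by
    apply Finset.ext
    intro b
    constructor
    · intro hb
      obtain ⟨c, hc, rfl⟩ := Finset.mem_image.1 hb
      obtain ⟨b', hb', rfl⟩ := (hmemT' c).1 hc
      rw [shiftUp_shiftDown a b' (hF1h b' hb')]
      exact hb'
    · intro hb
      rw [Finset.mem_image]
      refine ⟨shiftDown a b, (hmemT' _).2 ⟨b, hb, rfl⟩, shiftUp_shiftDown a b (hF1h b hb)⟩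
  have hrecon : T = reconF k a i T' := by
    rw [reconF, hbottom, hup, hR, hF1]
    rw [Finset.filter_union_filter_not_eq]
  exact ⟨i, a, T', hipos, hij, hicard, ha1, ha2, hT'is, hcard', hrecon⟩

lemma bottomRow_filter {k : ℕ} (a : ℤ) (i : ℕ) (T' : Finset Blk) :
    (reconF k a i T').filter (fun b => b.height = 0) = bottomRow k a i := by
  ext b
  simp only [Finset.mem_filter, reconF, Finset.mem_union, mem_bottomRow]
  constructor
  · rintro ⟨hb | hb, hh⟩
    · exact hb
    · obtain ⟨c, _, rfl⟩ := Finset.mem_image.1 hb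
      simp [shiftUp] at hh
  · rintro ⟨m, hm, rfl⟩
    exact ⟨Or.inl ⟨m, hm, rfl⟩, rfl⟩

lemma up_filter {k : ℕ} (a : ℤ) (i : ℕ) (T' : Finset Blk) :
    (reconF k a i T').filter (fun b => ¬ b.height = 0) = T'.image (shiftUp a) := by
  ext b
  simp only [Finset.mem_filter, reconF, Finset.mem_union]
  constructor
  · rintro ⟨hb | hb, hh⟩
    · rw [mem_bottomRow] at hb
      obtain ⟨m, _, rfl⟩ := hb
      simp [blkm] at hh
    · exact hb
  · intro hb
    obtain ⟨c, _, rfl⟩ := Finset.mem_image.1 hb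
    exact ⟨Or.inr hb, by simp [shiftUp]⟩

lemma reconF_inj {k : ℕ} (hk : 1 ≤ k) {a a' : ℤ} {i i' : ℕ} {T' T'' : Finset Blk}
    (hi : 1 ≤ i) (hi' : 1 ≤ i')
    (h : reconF k a i T' = reconF k a' i' T'') : i = i' ∧ a = a' ∧ T' = T'' := by
  have hbot : bottomRow k a i = bottomRow k a' i' := by
    rw [← bottomRow_filter a i T', ← bottomRow_filter a' i' T'', h]
  have hii : i = i' := by
    have := congrArg Finset.card hbot
    rwa [card_bottomRow hk, card_bottomRow hk] at this
  have haa : a = a' := by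
    have h1 : blkm k a 0 ∈ bottomRow k a' i' := by
      rw [← hbot, mem_bottomRow]
      exact ⟨0, by omega, rfl⟩
    have h2 : blkm k a' 0 ∈ bottomRow k a i := by
      rw [hbot, mem_bottomRow]
      exact ⟨0, by omega, rfl⟩
    rw [mem_bottomRow] at h1 h2
    obtain ⟨m, _, hm⟩ := h1
    obtain ⟨m', _, hm'⟩ := h2
    simp only [blkm, Blk.mk.injEq] at hm hm'
    have e1 := hm.1
    have e2 := hm'.1
    have g1 := mul_nonneg_k m k
    have g2 := mul_nonneg_k m' k
    omega
  refine ⟨hii, haa, ?_⟩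
  have hupv : T'.image (shiftUp a) = T''.image (shiftUp a') := by
    rw [← up_filter a i T', ← up_filter a' i' T'', h]
  rw [← haa] at hupv
  exact Finset.image_injective (shiftUp_inj a) hupv

/-- the towers with n blocks over platform of width jk -/
def Tow (k j n : ℕ) := {T : Finset Blk // IsPlatformRC k j T ∧ T.card = n}

lemma fPlatform_eq_card (k j n : ℕ) : fPlatform k j n = Nat.card (Tow k j n) := rfl

/-- index data: number of bottom blocks and offset -/
noncomputable def Idx (k j n : ℕ) : Finset ((_ : ℕ) × ℤ) :=
  (Finset.Icc 1 (min (j+1) n)).sigma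
    (fun i => Finset.Icc (1 - (k:ℤ)) ((j:ℤ)*k + k - 1 - (i:ℤ)*k))

lemma mem_Idx {k j n : ℕ} {x : (_ : ℕ) × ℤ} :
    x ∈ Idx k j n ↔ (1 ≤ x.1 ∧ x.1 ≤ j+1 ∧ x.1 ≤ n) ∧
      (1 - (k:ℤ) ≤ x.2 ∧ x.2 ≤ (j:ℤ)*k + k - 1 - (x.1:ℤ)*k) := by
  rw [Idx, Finset.mem_sigma, Finset.mem_Icc, Finset.mem_Icc]
  constructor
  · rintro ⟨⟨a1, a2⟩, b1, b2⟩
    exact ⟨⟨a1, by omega, by omega⟩, b1, b2⟩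
  · rintro ⟨⟨a1, a2, a3⟩, b1, b2⟩
    exact ⟨⟨a1, by omega⟩, b1, b2⟩

def pack (k j n : ℕ)
    (p : (x : ↥(Idx k j n)) × Tow k x.val.1 (n - x.val.1)) : Finset Blk :=
  reconF k p.1.val.2 p.1.val.1 p.2.val

lemma pack_is {k j n : ℕ} (hk : 1 ≤ k) (hj : 1 ≤ j)
    (p : (x : ↥(Idx k j n)) × Tow k x.val.1 (n - x.val.1)) :
    IsPlatformRC k j (pack k j n p) ∧ (pack k j n p).card = n := by
  obtain ⟨⟨h1, h2, h3⟩, h4, h5⟩ := mem_Idx.1 p.1.property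
  refine ⟨recon_is hk hj h1 p.2.property.1 (by omega) (by linarith), ?_⟩
  rw [pack, recon_card hk, p.2.property.2]
  omega

noncomputable def packT (k j n : ℕ) (hk : 1 ≤ k) (hj : 1 ≤ j)
    (p : (x : ↥(Idx k j n)) × Tow k x.val.1 (n - x.val.1)) : Tow k j n :=
  ⟨pack k j n p, pack_is hk hj p⟩

lemma packT_bij (k j n : ℕ) (hk : 1 ≤ k) (hj : 1 ≤ j) (hn : 1 ≤ n) :
    Function.Bijective (packT k j n hk hj) := by
  constructor
  · rintro ⟨⟨⟨i, a⟩, hx⟩, ⟨T', hT'⟩⟩ ⟨⟨⟨i', a'⟩, hx'⟩, ⟨T'', hT''⟩⟩ h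
    have hval : reconF k a i T' = reconF k a' i' T'' := congrArg Subtype.val h
    have h1 : 1 ≤ i := (mem_Idx.1 hx).1.1
    have h2 : 1 ≤ i' := (mem_Idx.1 hx').1.1
    obtain ⟨rfl, rfl, rfl⟩ := reconF_inj hk h1 h2 hval
    rfl
  · rintro ⟨T, hTis, hTcard⟩
    have hne : T.Nonempty := Finset.card_pos.1 (by omega)
    obtain ⟨i, a, T', h1, h2, h3, h4, h5, h6, h7, h8⟩ := decomp hk hj T hTis hne
    have hxmem : (⟨i, a⟩ : (_ : ℕ) × ℤ) ∈ Idx k j n :=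
      Finset.mem_sigma.2 ⟨Finset.mem_Icc.2 ⟨h1, by show i ≤ (j+1) ⊓ n; omega⟩,
        Finset.mem_Icc.2 ⟨by show 1 - (k:ℤ) ≤ a; omega,
          by show a ≤ (j:ℤ)*k + k - 1 - (i:ℤ)*k; linarith⟩⟩
    refine ⟨⟨⟨⟨i, a⟩, hxmem⟩, ⟨T', h6, by rw [h7, hTcard]⟩⟩, ?_⟩
    apply Subtype.ext
    exact h8.symm

lemma tow_subsingleton_zero (k j : ℕ) : Subsingleton (Tow k j 0) := by
  constructor
  rintro ⟨T, _, hT⟩ ⟨T', _, hT'⟩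
  apply Subtype.ext
  simp only
  rw [Finset.card_eq_zero.1 hT, Finset.card_eq_zero.1 hT']

lemma tow_nonempty_zero (k j : ℕ) : Nonempty (Tow k j 0) := by
  refine ⟨⟨∅, ⟨?_, ?_, ?_, ?_, ?_⟩, rfl⟩⟩
  · intro b hb; simp at hb
  · intro b hb; simp at hb
  · intro b hb; simp at hb
  · intro h x y z hx hz _ _
    obtain ⟨b, hb, _⟩ := hx
    simp at hb
  · intro b hb; simp at hb

lemma fPlatform_zero (k j : ℕ) : fPlatform k j 0 = 1 := by
  rw [fPlatform_eq_card]
  haveI := tow_subsingleton_zero k j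
  haveI := tow_nonempty_zero k j
  exact Nat.card_eq_one_iff_unique.2 ⟨inferInstance, inferInstance⟩

lemma tow_finite (k : ℕ) (hk : 1 ≤ k) : ∀ n j, 1 ≤ j → Finite (Tow k j n) := by
  intro n
  induction n using Nat.strong_induction_on with
  | _ n ih =>
    intro j hj
    rcases Nat.eq_zero_or_pos n with rfl | hn
    · haveI := tow_subsingleton_zero k j
      exact Finite.of_subsingleton
    · haveI : ∀ x : ↥(Idx k j n), Finite (Tow k x.val.1 (n - x.val.1)) := by
        intro x
        obtain ⟨⟨hx1, _, hx3⟩, _⟩ := mem_Idx.1 x.property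
        exact ih (n - x.val.1) (by omega) x.val.1 hx1
      exact Finite.of_surjective (packT k j n hk hj) (packT_bij k j n hk hj hn).2

lemma count_eq (k j n : ℕ) (hk : 1 ≤ k) (hj : 1 ≤ j) (hn : 1 ≤ n) :
    fPlatform k j n = ∑ i ∈ Finset.Icc 1 (min (j+1) n),
      ((j:ℤ)*k + 2*k - 1 - (i:ℤ)*k).toNat * fPlatform k i (n - i) := by
  classical
  haveI hfin : ∀ x : ↥(Idx k j n), Finite (Tow k x.val.1 (n - x.val.1)) := by
    intro x
    obtain ⟨⟨hx1, _, hx3⟩, _⟩ := mem_Idx.1 x.property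
    exact tow_finite k hk (n - x.val.1) x.val.1 hx1
  haveI : ∀ x : ↥(Idx k j n), Fintype (Tow k x.val.1 (n - x.val.1)) :=
    fun x => Fintype.ofFinite _
  have hcard := Nat.card_congr
    (Equiv.ofBijective (packT k j n hk hj) (packT_bij k j n hk hj hn)).symm
  rw [fPlatform_eq_card, hcard, Nat.card_eq_fintype_card, Fintype.card_sigma]
  have hstep : ∀ x : ↥(Idx k j n),
      Fintype.card (Tow k x.val.1 (n - x.val.1)) = fPlatform k x.val.1 (n - x.val.1) := by
    intro x
    rw [fPlatform_eq_card, Nat.card_eq_fintype_card]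
  rw [Finset.sum_congr rfl (fun x _ => hstep x)]
  rw [Finset.sum_coe_sort (Idx k j n) (fun x => fPlatform k x.1 (n - x.1))]
  rw [Idx, Finset.sum_sigma]
  apply Finset.sum_congr rfl
  intro i hi
  show (∑ _a ∈ Finset.Icc (1 - (k:ℤ)) ((j:ℤ)*k + k - 1 - (i:ℤ)*k),
      fPlatform k i (n - i)) = _
  rw [Finset.sum_const, Int.card_Icc, smul_eq_mul]
  congr 1
  congr 1
  ring

open PowerSeries
open RCT (wq)

lemma Feq (k : ℕ) (hk : 1 ≤ k) (j : ℕ) (hj : 1 ≤ j) :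
    Fser k j = 1 + ∑ i ∈ Finset.Icc 1 (j+1),
      PowerSeries.C (wq k j i) * PowerSeries.X^i * Fser k i := by
  apply PowerSeries.ext
  intro n
  rw [Fser, PowerSeries.coeff_mk, map_add, map_sum]
  have hterm : ∀ i ∈ Finset.Icc 1 (j+1),
      (PowerSeries.coeff n) (C (wq k j i) * X^i * Fser k i)
        = wq k j i * (if i ≤ n then ((fPlatform k i (n - i) : ℚ)) else 0) := by
    intro i hi
    rw [show C (wq k j i) * X^i * Fser k i = C (wq k j i) * (Fser k i * X^i) by ring,
      PowerSeries.coeff_C_mul, PowerSeries.coeff_mul_X_pow']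
    congr 1
    split
    · rw [Fser, PowerSeries.coeff_mk]
    · rfl
  rw [Finset.sum_congr rfl hterm]
  rcases Nat.eq_zero_or_pos n with rfl | hn
  · rw [fPlatform_zero]
    have hz : ∀ i ∈ Finset.Icc 1 (j+1),
        wq k j i * (if i ≤ 0 then ((fPlatform k i (0 - i)):ℚ) else 0) = 0 := by
      intro i hi
      rw [Finset.mem_Icc] at hi
      rw [if_neg (by omega)]
      ring
    rw [Finset.sum_congr rfl hz, Finset.sum_const_zero]
    norm_num
  · rw [count_eq k j n hk hj hn]
    rw [PowerSeries.coeff_one, if_neg (by omega)]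
    have hsub : Finset.Icc 1 (min (j+1) n) ⊆ Finset.Icc 1 (j+1) :=
      Finset.Icc_subset_Icc_right (by omega)
    have hvanish : ∀ i ∈ Finset.Icc 1 (j+1), i ∉ Finset.Icc 1 (min (j+1) n) →
        wq k j i * (if i ≤ n then ((fPlatform k i (n - i)):ℚ) else 0) = 0 := by
      intro i hi hni
      rw [Finset.mem_Icc] at hi
      rw [Finset.mem_Icc] at hni
      rw [if_neg (by omega)]
      ring
    rw [← Finset.sum_subset hsub hvanish, zero_add, Nat.cast_sum]
    apply Finset.sum_congr rfl
    intro i hi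
    rw [Finset.mem_Icc] at hi
    rw [if_pos (by omega), Nat.cast_mul]
    congr 1
    have hik : (i:ℤ) * k ≤ ((j:ℤ)+1) * k := by
      have h1 : (i:ℤ) ≤ (j:ℤ)+1 := by exact_mod_cast (by omega : i ≤ j+1)
      exact mul_le_mul_of_nonneg_right h1 (by positivity)
    have hkz : (1:ℤ) ≤ (k:ℤ) := by exact_mod_cast hk
    have hnn : (0:ℤ) ≤ (j:ℤ)*k + 2*k - 1 - (i:ℤ)*k := by nlinarith
    have hc1 : ((((j:ℤ)*k + 2*k - 1 - (i:ℤ)*k).toNat : ℕ) : ℚ)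
        = (((((j:ℤ)*k + 2*k - 1 - (i:ℤ)*k).toNat : ℕ) : ℤ) : ℚ) := by
      push_cast
      ring
    rw [hc1, Int.toNat_of_nonneg hnn]
    unfold RCT.wq
    push_cast
    ring

end RCC

open RCT in
/-- combinatorial functional equation -/
lemma Feq (k : ℕ) (hk : 2 ≤ k) (j : ℕ) (hj : 1 ≤ j) :
    Fser k j = 1 + ∑ i ∈ Finset.Icc 1 (j+1),
      PowerSeries.C (wq k j i) * PowerSeries.X^i * Fser k i :=
  RCC.Feq k (by omega) j hj

/-- The exact generating function for row-convex `k`-omino towers over a platform: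
`F_ℓ · [(1 − (2k−1)(1+z)z + k² z³) T_{1,2} + (k−1)((2k−1)z − 1) z³ T_{1,3} + (k−1)² z⁵ T_{2,3}]
 = (1 + kz) T_{1,ℓ} + (kz² − 1) T_{2,ℓ} + (k−1) z³ T_{3,ℓ}`. -/
theorem rowconvex_gf (k : ℕ) (hk : 2 ≤ k) (ℓ : ℕ) (hℓ : 1 ≤ ℓ) :
    Fser k ℓ *
        ((1 - PowerSeries.C (2 * (k : ℚ) - 1) *
            ((1 + PowerSeries.X) * PowerSeries.X) +
            PowerSeries.C ((k : ℚ) ^ 2) * PowerSeries.X ^ 3) * Tst k 1 2 +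
          PowerSeries.C ((k : ℚ) - 1) *
            (PowerSeries.C (2 * (k : ℚ) - 1) * PowerSeries.X - 1) *
            PowerSeries.X ^ 3 * Tst k 1 3 +
          PowerSeries.C (((k : ℚ) - 1) ^ 2) * PowerSeries.X ^ 5 * Tst k 2 3) =
      (1 + PowerSeries.C (k : ℚ) * PowerSeries.X) * Tst k 1 ℓ +
        (PowerSeries.C (k : ℚ) * PowerSeries.X ^ 2 - 1) * Tst k 2 ℓ +
        PowerSeries.C ((k : ℚ) - 1) * PowerSeries.X ^ 3 * Tst k 3 ℓ := by
  classical
  open RCT PowerSeries in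
  set Delta : PowerSeries ℚ :=
      ((1 - PowerSeries.C (2 * (k : ℚ) - 1) *
            ((1 + PowerSeries.X) * PowerSeries.X) +
            PowerSeries.C ((k : ℚ) ^ 2) * PowerSeries.X ^ 3) * Tst k 1 2 +
          PowerSeries.C ((k : ℚ) - 1) *
            (PowerSeries.C (2 * (k : ℚ) - 1) * PowerSeries.X - 1) *
            PowerSeries.X ^ 3 * Tst k 1 3 +
          PowerSeries.C (((k : ℚ) - 1) ^ 2) * PowerSeries.X ^ 5 * Tst k 2 3) with hDelta
  set A : ℕ → RCT.Q := fun i => Aser k i with hA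
  set B : ℕ → RCT.Q := fun i => Bser k i with hB
  set dA : RCT.Q := Lop k A 2 - Lop k A 1 with hdA
  set dB : RCT.Q := Lop k B 2 - Lop k B 1 with hdB
  set W : ℕ → RCT.Q := fun i => dB * A i - dA * B i with hW
  have hWconst : ∀ j, Lop k W j = dB * Lop k A 1 - dA * Lop k B 1 :=
    Lop_W_const k A B (recA k) (recB k) dA dB (by rw [← hdA, ← hdB, mul_comm])
  have hConst : dB * Lop k A 1 - dA * Lop k B 1 = Delta := by
    rw [hdA, hdB, Lop1_eq k A, Lop1_eq k B, Lop2_eq k A, Lop2_eq k B, hDelta]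
    simp only [Tst, hA, hB]
    have c1 : PowerSeries.C (2*(k:ℚ)-1) = 2 * PowerSeries.C (k:ℚ) - 1 := by
      rw [map_sub, map_mul, map_ofNat, map_one]
    have c2 : PowerSeries.C (3*(k:ℚ)-1) = 3 * PowerSeries.C (k:ℚ) - 1 := by
      rw [map_sub, map_mul, map_ofNat, map_one]
    have c3 : PowerSeries.C ((k:ℚ)-1) = PowerSeries.C (k:ℚ) - 1 := by
      rw [map_sub, map_one]
    have c4 : PowerSeries.C ((k:ℚ)^2) = (PowerSeries.C (k:ℚ))^2 := by
      rw [map_pow]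
    have c5 : PowerSeries.C (((k:ℚ)-1)^2) = (PowerSeries.C (k:ℚ) - 1)^2 := by
      rw [map_pow, map_sub, map_one]
    rw [c1, c2, c3, c4, c5]
    ring
  have hWsol : ∀ j, 1 ≤ j → W j = Delta + ∑ i ∈ Finset.Icc 1 (j+1),
      PowerSeries.C (wq k j i) * PowerSeries.X^i * W i := by
    intro j _
    have h := hWconst j
    rw [hConst] at h
    unfold Lop at h
    linear_combination h
  have hFsol : ∀ j, 1 ≤ j → Fser k j * Delta = Delta + ∑ i ∈ Finset.Icc 1 (j+1),
      PowerSeries.C (wq k j i) * PowerSeries.X^i * (Fser k i * Delta) := by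
    intro j hj
    rw [Feq k hk j hj, add_mul, one_mul, Finset.sum_mul]
    congr 1
    apply Finset.sum_congr rfl
    intro i _
    ring
  have hmain : Fser k ℓ * Delta = W ℓ :=
    unique_sol k Delta (fun i => Fser k i * Delta) W hFsol hWsol ℓ hℓ
  rw [hmain, hW]
  simp only [hdA, hdB, Lop1_eq k A, Lop1_eq k B, Lop2_eq k A, Lop2_eq k B]
  simp only [hA, hB, Tst]
  have c1 : PowerSeries.C (2*(k:ℚ)-1) = 2 * PowerSeries.C (k:ℚ) - 1 := by
    rw [map_sub, map_mul, map_ofNat, map_one]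
  have c2 : PowerSeries.C (3*(k:ℚ)-1) = 3 * PowerSeries.C (k:ℚ) - 1 := by
    rw [map_sub, map_mul, map_ofNat, map_one]
  have c3 : PowerSeries.C ((k:ℚ)-1) = PowerSeries.C (k:ℚ) - 1 := by
    rw [map_sub, map_one]
  rw [c1, c2, c3]
  ring
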